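/- Let q ≥ 2, m ≥ 1, and let i be an integer with 1 ≤ i < q^m such that l_m(i−1) = m. Then the minimal prefix satisfies ī_m = (i−1)‾_m + 1; equivalently ī_m = i. -/

import Mathlib

/-- `pt q n s = ⌊n / q^s⌋` (the "part"). -/
def pt (q n s : ℕ) : ℕ := n / q ^ s

/-- `rs q n s = n mod q^s` (the "residue"). -/
def rs (q n s : ℕ) : ℕ := n % q ^ s

/-- `lm q m n = min { j | 1 ≤ j ≤ m and part(n,j) ≥ res(n, m-j) }`. -/
noncomputable def lm (q m n : ℕ) : ℕ :=
  sInf {j : ℕ | 1 ≤ j ∧ j ≤ m ∧ rs q n (m - j) ≤ pt q n j}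

/-- The minimal prefix `n̄_m = n - res(n, m - l_m(n))`. -/
noncomputable def mp (q m n : ℕ) : ℕ := n - rs q n (m - lm q m n)

theorem mp_succ (q m : ℕ) (hq : 2 ≤ q) (hm : 1 ≤ m)
    (i : ℕ) (hi1 : 1 ≤ i) (hi2 : i < q ^ m) (hl : lm q m (i - 1) = m) :
    mp q m i = mp q m (i - 1) + 1 ∧ mp q m i = i := by
  set a := i - 1 with ha
  have hia : i = a + 1 := by omega
  have hmpa : mp q m a = a := by
    unfold mp
    rw [hl]
    simp [rs, Nat.mod_one]
  have hmS : m ∈ {j : ℕ | 1 ≤ j ∧ j ≤ m ∧ rs q i (m - j) ≤ pt q i j} := by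
    refine ⟨hm, le_refl m, ?_⟩
    simp [rs, Nat.mod_one]
  set l := lm q m i with hlm
  have hlS : l ∈ {j : ℕ | 1 ≤ j ∧ j ≤ m ∧ rs q i (m - j) ≤ pt q i j} :=
    Nat.sInf_mem ⟨m, hmS⟩
  obtain ⟨hl1, hlm', hcond⟩ := hlS
  have hdvd : i % q ^ (m - l) = 0 := by
    rcases eq_or_lt_of_le hlm' with heq | hlt
    · simp [heq, Nat.mod_one]
    · have hnot : l ∉ {j : ℕ | 1 ≤ j ∧ j ≤ m ∧ rs q a (m - j) ≤ pt q a j} := by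
        apply Nat.notMem_of_lt_sInf
        rw [← lm, hl]; exact hlt
      have hgt : pt q a l < rs q a (m - l) := by
        by_contra h
        exact hnot ⟨hl1, le_of_lt hlt, le_of_not_gt h⟩
      set P := q ^ (m - l) with hP
      set Q := q ^ l with hQ
      have hQpos : 0 < Q := Nat.pow_pos (by omega)
      have hP2 : 2 ≤ P := by
        calc 2 ≤ q := hq
        _ = q ^ 1 := (pow_one q).symm
        _ ≤ P := Nat.pow_le_pow_right (by omega) (by omega)
      have hmodlt : a % P < P := Nat.mod_lt _ (by omega)
      have key : i % P = (a % P + 1) % P := by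
        rw [hia, Nat.add_mod, Nat.mod_eq_of_lt (show 1 < P by omega)]
      by_contra hne
      have himod : i % P = a % P + 1 := by
        rcases Nat.lt_or_ge (a % P + 1) P with h | h
        · rw [key, Nat.mod_eq_of_lt h]
        · have : a % P + 1 = P := by omega
          rw [key, this, Nat.mod_self] at hne
          exact absurd rfl hne
      have hdivle : i / Q ≤ a / Q + 1 := by
        have h1 : i ≤ a + Q := by omega
        calc i / Q ≤ (a + Q) / Q := Nat.div_le_div_right h1
        _ = a / Q + 1 := Nat.add_div_right a hQpos
      have hc : i % P ≤ i / Q := hcond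
      have hgt' : a / Q < a % P := hgt
      omega
  have hmpi : mp q m i = i := by
    unfold mp
    rw [← hlm]
    show i - i % q ^ (m - l) = i
    omega
  exact ⟨by omega, hmpi⟩
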